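/- Let λ be a probability measure on X which is R-invariant (∫ R f dλ = ∫ f dλ for every nonnegative measurable f : X → ℝ), and suppose σ is measure-preserving and ergodic with respect to λ. Let μ be a finite measure on X with μ ≪ λ which is R-invariant (∫ R f dμ = ∫ f dμ for every nonnegative measurable f). Then there exists a constant c ≥ 0 such that μ = c • λ. -/
import Mathlib


open MeasureTheory
open scoped ENNReal

/-- If `λ` is an `R`-invariant probability measure and `σ` is measure preserving
and ergodic for `λ`, then every finite `R`-invariant measure `μ ≪ λ` is a
nonnegative multiple of `λ`. -/
theorem stmt_6 {X : Type*} [MeasurableSpace X] (σ : X → X)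
    (hσ : Measurable σ) (hσsurj : Function.Surjective σ)
    (R : (X → ℝ) → (X → ℝ))
    (hadd : ∀ f g : X → ℝ, R (f + g) = R f + R g)
    (hsmul : ∀ (c : ℝ) (f : X → ℝ), R (c • f) = c • R f)
    (hmeas : ∀ f : X → ℝ, Measurable f → Measurable (R f))
    (hpos : ∀ f : X → ℝ, 0 ≤ f → 0 ≤ R f)
    (hpull : ∀ f g : X → ℝ, Measurable f → Measurable g →
      R ((f ∘ σ) * g) = f * R g)
    (lam : Measure X) [IsProbabilityMeasure lam]
    (hRinv : ∀ f : X → ℝ, Measurable f → 0 ≤ f →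
      ∫⁻ x, ENNReal.ofReal (R f x) ∂lam = ∫⁻ x, ENNReal.ofReal (f x) ∂lam)
    (hmp : MeasurePreserving σ lam lam)
    (herg : ∀ A : Set X, MeasurableSet A → σ ⁻¹' A = A → lam A = 0 ∨ lam Aᶜ = 0)
    (μ : Measure X) [IsFiniteMeasure μ] (hac : μ ≪ lam)
    (hμinv : ∀ f : X → ℝ, Measurable f → 0 ≤ f →
      ∫⁻ x, ENNReal.ofReal (R f x) ∂μ = ∫⁻ x, ENNReal.ofReal (f x) ∂μ) :
    ∃ c : NNReal, μ = c • lam := by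
  classical
  -- real-valued version of the Radon–Nikodym derivative
  set h : X → ℝ := fun x => (μ.rnDeriv lam x).toReal with hh_def
  have hmeas_h : Measurable h := (μ.measurable_rnDeriv lam).ennreal_toReal
  have hh0 : 0 ≤ h := fun x => ENNReal.toReal_nonneg
  set w : X → ℝ≥0∞ := fun x => ENNReal.ofReal (h x) with hw_def
  have hmeas_w : Measurable w := hmeas_h.ennreal_ofReal
  have hw_ae : w =ᵐ[lam] μ.rnDeriv lam := by
    filter_upwards [μ.rnDeriv_lt_top lam] with x hx
    simp [hw_def, hh_def, ENNReal.ofReal_toReal hx.ne]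
  have hwd : lam.withDensity w = μ := by
    rw [MeasureTheory.withDensity_congr_ae hw_ae]
    exact Measure.withDensity_rnDeriv_eq μ lam hac
  -- key identity: testing against any nonneg measurable g, w ∘ σ and w agree
  have key : ∀ g : X → ℝ, Measurable g → 0 ≤ g →
      ∫⁻ x, w (σ x) * ENNReal.ofReal (g x) ∂lam
        = ∫⁻ x, w x * ENNReal.ofReal (g x) ∂lam := by
    intro g hg hg0
    have hRg0 : 0 ≤ R g := hpos g hg0
    have hRgm : Measurable (R g) := hmeas g hg
    -- (I) from lam's R-invariance and the pull-out property
    have hI : ∫⁻ x, w x * ENNReal.ofReal (R g x) ∂lam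
        = ∫⁻ x, w (σ x) * ENNReal.ofReal (g x) ∂lam := by
      have hhσg : Measurable ((h ∘ σ) * g) := (hmeas_h.comp hσ).mul hg
      have hhσg0 : 0 ≤ (h ∘ σ) * g := fun x => mul_nonneg (hh0 _) (hg0 x)
      have := hRinv ((h ∘ σ) * g) hhσg hhσg0
      rw [hpull h g hmeas_h hg] at this
      calc ∫⁻ x, w x * ENNReal.ofReal (R g x) ∂lam
          = ∫⁻ x, ENNReal.ofReal ((h * R g) x) ∂lam := by
            refine lintegral_congr fun x => ?_
            simp [hw_def, ENNReal.ofReal_mul (hh0 x)]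
        _ = ∫⁻ x, ENNReal.ofReal (((h ∘ σ) * g) x) ∂lam := this
        _ = ∫⁻ x, w (σ x) * ENNReal.ofReal (g x) ∂lam := by
            refine lintegral_congr fun x => ?_
            simp [hw_def, ENNReal.ofReal_mul (hh0 (σ x)), Function.comp]
    -- (II) from μ's R-invariance, written w.r.t. lam
    have hII : ∫⁻ x, w x * ENNReal.ofReal (R g x) ∂lam
        = ∫⁻ x, w x * ENNReal.ofReal (g x) ∂lam := by
      have h1 : ∫⁻ x, w x * ENNReal.ofReal (R g x) ∂lam
          = ∫⁻ x, ENNReal.ofReal (R g x) ∂μ := by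
        rw [← hwd, lintegral_withDensity_eq_lintegral_mul lam hmeas_w
          hRgm.ennreal_ofReal]
        rfl
      have h2 : ∫⁻ x, w x * ENNReal.ofReal (g x) ∂lam
          = ∫⁻ x, ENNReal.ofReal (g x) ∂μ := by
        rw [← hwd, lintegral_withDensity_eq_lintegral_mul lam hmeas_w
          hg.ennreal_ofReal]
        rfl
      rw [h1, h2, hμinv g hg hg0]
    rw [← hI, hII]
  -- hence w ∘ σ = w a.e.
  have hinv : (w ∘ σ) =ᵐ[lam] w := by
    refine ae_eq_of_forall_setLIntegral_eq_of_sigmaFinite (hmeas_w.comp hσ) hmeas_w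
      fun s hs _ => ?_
    have := key (s.indicator 1) (measurable_one.indicator hs)
      (fun x => Set.indicator_nonneg (fun _ _ => zero_le_one) x)
    have e1 : ∀ F : X → ℝ≥0∞, ∫⁻ x, F x * ENNReal.ofReal (s.indicator 1 x) ∂lam
        = ∫⁻ x in s, F x ∂lam := by
      intro F
      rw [← lintegral_indicator hs]
      refine lintegral_congr fun x => ?_
      by_cases hx : x ∈ s <;> simp [hx]
    rw [e1 (fun x => w (σ x)), e1 w] at this
    exact this
  -- ergodicity: w is a.e. constant
  have herg' : Ergodic σ lam := by
    refine ⟨hmp, ⟨fun s hs hsi => ?_⟩⟩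
    rw [Filter.eventuallyConst_set']
    rcases herg s hs hsi with h0 | h0
    · exact Or.inl (ae_eq_empty.2 h0)
    · exact Or.inr (ae_eq_univ.2 h0)
  obtain ⟨c, hc⟩ := herg'.ae_eq_const_of_ae_eq_comp₀ hmeas_w.nullMeasurable hinv
  have hμc : μ = c • lam := by
    rw [← hwd, MeasureTheory.withDensity_congr_ae hc]
    exact withDensity_const c
  have hcfin : c ≠ ∞ := by
    intro hcc
    have : μ Set.univ = ∞ := by
      rw [hμc, Measure.smul_apply, smul_eq_mul, hcc, measure_univ, mul_one]
    exact (measure_ne_top μ Set.univ) this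
  refine ⟨c.toNNReal, ?_⟩
  rw [hμc]
  ext s hs
  simp [Measure.smul_apply, ENNReal.smul_def, ENNReal.coe_toNNReal hcfin]
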